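/- Consider a heterogeneous BNPG on the complete graph with n players and let k be an integer with 0 < k < n. Define I⁺(k) = {i : c_i < Δg_i(k)} and I⁻(k) = {i : c_i > Δg_i(k−1)}. Suppose that there is no player i with Δg_i(k−1) < c_i < Δg_i(k). Then the game has a non-trivial PSNE with exactly k investing players if and only if |I⁺(k)| ≤ k, |I⁻(k)| ≤ n − k, and |V \ (I⁺(k) ∪ I⁻(k))| ≥ k − |I⁺(k)|. -/
import Mathlib


/-- Finite difference `Δg(m) = g(m+1) − g(m)`. -/
def Δg (g : ℕ → ℝ) (m : ℕ) : ℝ := g (m + 1) - g m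

/-- Number of investing neighbors of player `i` under profile `x` in graph `G`. -/
noncomputable def nInv {V : Type*} (G : SimpleGraph V) (x : V → Bool) (i : V) : ℕ :=
  {j | G.Adj i j ∧ x j = true}.ncard

/-- Pure-strategy Nash equilibrium of the BNPG on `G` with externalities `g` and costs `c`. -/
def IsPSNE {V : Type*} (G : SimpleGraph V) (g : V → ℕ → ℝ) (c : V → ℝ)
    (x : V → Bool) : Prop :=
  ∀ i, (x i = true → c i ≤ Δg (g i) (nInv G x i)) ∧
       (x i = false → Δg (g i) (nInv G x i) ≤ c i)

lemma nInv_top {n : ℕ} (x : Fin n → Bool) (i : Fin n) :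
    nInv (⊤ : SimpleGraph (Fin n)) x i = ({j | x j = true} \ {i}).ncard := by
  unfold nInv
  congr 1
  ext j
  simp only [SimpleGraph.top_adj, Set.mem_setOf_eq, Set.mem_diff, Set.mem_singleton_iff]
  exact ⟨fun ⟨h1, h2⟩ => ⟨h2, fun e => h1 e.symm⟩, fun ⟨h1, h2⟩ => ⟨fun e => h2 e.symm, h1⟩⟩

lemma nInv_top_true {n : ℕ} {x : Fin n → Bool} {i : Fin n} (hi : x i = true) :
    nInv (⊤ : SimpleGraph (Fin n)) x i = {j | x j = true}.ncard - 1 := by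
  rw [nInv_top]
  exact Set.ncard_diff_singleton_of_mem (show i ∈ {j | x j = true} from hi)

lemma nInv_top_false {n : ℕ} {x : Fin n → Bool} {i : Fin n} (hi : x i = false) :
    nInv (⊤ : SimpleGraph (Fin n)) x i = {j | x j = true}.ncard := by
  rw [nInv_top]
  congr 1
  rw [Set.diff_singleton_eq_self]
  simp [hi]

/-- heterogeneous BNPG on the complete graph on `n` players, `0 < k < n`,
with no player `i` satisfying `Δg_i(k−1) < c_i < Δg_i(k)`.  The game has a (non-trivial)
PSNE with exactly `k` investing players iff `|I⁺(k)| ≤ k`, `|I⁻(k)| ≤ n − k`, and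
`|V \ (I⁺(k) ∪ I⁻(k))| ≥ k − |I⁺(k)|`. -/
theorem stmt1 (n k : ℕ) (hk0 : 0 < k) (hkn : k < n)
    (g : Fin n → ℕ → ℝ) (hmono : ∀ i, Monotone (g i)) (c : Fin n → ℝ)
    (hno : ∀ i : Fin n, ¬ (Δg (g i) (k - 1) < c i ∧ c i < Δg (g i) k)) :
    (∃ x : Fin n → Bool,
        IsPSNE (⊤ : SimpleGraph (Fin n)) g c x ∧ {i | x i = true}.ncard = k) ↔
      ({i : Fin n | c i < Δg (g i) k}.ncard ≤ k ∧
       {i : Fin n | Δg (g i) (k - 1) < c i}.ncard ≤ n - k ∧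
       k - {i : Fin n | c i < Δg (g i) k}.ncard ≤
         (Set.univ \ ({i : Fin n | c i < Δg (g i) k} ∪
            {i : Fin n | Δg (g i) (k - 1) < c i})).ncard) := by
  classical
  set Ip : Set (Fin n) := {i | c i < Δg (g i) k} with hIp
  set Im : Set (Fin n) := {i | Δg (g i) (k - 1) < c i} with hIm
  constructor
  · rintro ⟨x, hx, hcard⟩
    set S : Set (Fin n) := {i | x i = true} with hS
    -- members of Ip must invest
    have hIpS : Ip ⊆ S := by
      intro i hi
      by_contra hiS
      have hfalse : x i = false := by
        simp only [hS, Set.mem_setOf_eq] at hiS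
        simpa using hiS
      have := (hx i).2 hfalse
      rw [nInv_top_false hfalse, hcard] at this
      exact absurd hi (by simp only [hIp, Set.mem_setOf_eq]; linarith)
    -- members of Im must not invest
    have hImS : ∀ i ∈ Im, i ∉ S := by
      intro i hi hiS
      have htrue : x i = true := hiS
      have := (hx i).1 htrue
      rw [nInv_top_true htrue, hcard] at this
      simp only [hIm, Set.mem_setOf_eq] at hi
      linarith
    have h1 : Ip.ncard ≤ k := hcard ▸ Set.ncard_le_ncard hIpS
    have h2 : Im.ncard ≤ n - k := by
      have hsub : Im ⊆ Sᶜ := fun i hi => hImS i hi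
      have := Set.ncard_le_ncard hsub (Set.toFinite _)
      have hc : S.ncard + Sᶜ.ncard = Nat.card (Fin n) := Set.ncard_add_ncard_compl S
      rw [Nat.card_eq_fintype_card, Fintype.card_fin, hcard] at hc
      omega
    refine ⟨h1, h2, ?_⟩
    have hsub : S \ Ip ⊆ Set.univ \ (Ip ∪ Im) := by
      rintro i ⟨hiS, hiIp⟩
      refine ⟨trivial, ?_⟩
      rintro (h | h)
      · exact hiIp h
      · exact hImS i h hiS
    have hle : S.ncard ≤ (S \ Ip).ncard + Ip.ncard := by
      have : S ⊆ (S \ Ip) ∪ Ip := by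
        intro i hi
        by_cases h : i ∈ Ip
        · exact Or.inr h
        · exact Or.inl ⟨hi, h⟩
      calc S.ncard ≤ ((S \ Ip) ∪ Ip).ncard := Set.ncard_le_ncard this
        _ ≤ (S \ Ip).ncard + Ip.ncard := Set.ncard_union_le _ _
    have := Set.ncard_le_ncard hsub (Set.toFinite _)
    omega
  · rintro ⟨h1, h2, h3⟩
    set F : Set (Fin n) := Set.univ \ (Ip ∪ Im) with hF
    obtain ⟨T, hTF, hTcard⟩ := Set.exists_subset_card_eq h3
    set x : Fin n → Bool := fun i => if i ∈ Ip ∪ T then true else false with hx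
    have hSeq : {i | x i = true} = Ip ∪ T := by
      ext i; simp [hx]
    have hdisj : Disjoint Ip T := by
      rw [Set.disjoint_left]
      intro i hi hiT
      have := hTF hiT
      exact this.2 (Or.inl hi)
    have hScard : {i | x i = true}.ncard = k := by
      rw [hSeq, Set.ncard_union_eq hdisj, hTcard]
      omega
    refine ⟨x, ?_, hScard⟩
    intro i
    constructor
    · intro hi
      rw [nInv_top_true hi, hScard]
      have hiU : i ∈ Ip ∪ T := by
        have : x i = true := hi
        simp only [hx] at this
        by_contra h
        simp [h] at this
      rcases hiU with h | h
      · -- i ∈ Ip : c i < Δg k, and by hno, c i ≤ Δg (k-1)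
        have hci : c i < Δg (g i) k := h
        have := hno i
        by_contra hlt
        push_neg at hlt
        exact this ⟨hlt, hci⟩
      · -- i ∈ T ⊆ F : i ∉ Im so c i ≤ Δg (k-1)
        have hiF := hTF h
        have : i ∉ Im := fun hm => hiF.2 (Or.inr hm)
        simp only [hIm, Set.mem_setOf_eq, not_lt] at this
        exact this
    · intro hi
      rw [nInv_top_false hi, hScard]
      have hiU : i ∉ Ip ∪ T := by
        intro h
        simp only [hx, if_pos h] at hi
        exact Bool.noConfusion hi
      have : i ∉ Ip := fun h => hiU (Or.inl h)
      simp only [hIp, Set.mem_setOf_eq, not_lt] at this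
      exact this
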